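/- Let x > 0 and a, b, c ∈ ℂ with positive real parts (non-real values among a,b,c occurring in conjugate pairs). Then there exist constants K > 0 and σ > 0, independent of n, such that |S_n(x²; a,b,c)| ≤ K (n!)² (1+n)^σ for all n ∈ ℕ₀. -/

import Mathlib

open Complex Finset

/-- The Pochhammer symbol (rising factorial) `(z)_n = z(z+1)⋯(z+n-1)`. -/
noncomputable def poch (z : ℂ) (n : ℕ) : ℂ := ∏ i ∈ Finset.range n, (z + i)

/-- The continuous dual Hahn polynomial `S_n(x²; a, b, c)`, via its terminating
`₃F₂(-n, a+ix, a-ix; a+b, a+c; 1)` representation. -/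
noncomputable def cdHahn (n : ℕ) (x : ℝ) (a b c : ℂ) : ℂ :=
  poch (a + b) n * poch (a + c) n *
    ∑ j ∈ Finset.range (n + 1),
      poch (-(n : ℂ)) j * poch (a + Complex.I * x) j * poch (a - Complex.I * x) j /
        (poch (a + b) j * poch (a + c) j * j.factorial)

lemma poch_succ (z : ℂ) (n : ℕ) : poch z (n+1) = poch z n * (z + n) := by
  simp [poch, Finset.prod_range_succ]

lemma poch_succ' (z : ℂ) (n : ℕ) : poch z (n+1) = z * poch (z+1) n := by
  rw [poch, Finset.prod_range_succ', mul_comm]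
  congr 1
  · simp
  · rw [poch]
    exact Finset.prod_congr rfl (fun i _ => by push_cast; ring)

lemma poch_add (z : ℂ) (m n : ℕ) : poch z (m+n) = poch z m * poch (z + m) n := by
  rw [poch, Finset.prod_range_add]
  congr 1
  exact Finset.prod_congr rfl (fun i _ => by push_cast; ring)

lemma poch_ne_zero {z : ℂ} (hz : 0 < z.re) (n : ℕ) : poch z n ≠ 0 := by
  apply Finset.prod_ne_zero_iff.mpr
  intro i _ h
  have h2 : (z + (i:ℂ)).re = 0 := by rw [h]; simp
  simp only [Complex.add_re, Complex.natCast_re] at h2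
  have : (0:ℝ) ≤ (i:ℝ) := Nat.cast_nonneg i
  linarith

/-- Vandermonde convolution. -/
lemma vand (u v : ℂ) : ∀ m : ℕ,
    ∑ l ∈ range (m+1), (m.choose l : ℂ) * poch u l * poch v (m-l) = poch (u+v) m := by
  intro m
  induction m with
  | zero => simp [poch]
  | succ m ih =>
    have key : ∀ l ∈ range (m+1), (m.choose l : ℂ) * poch u l * poch v (m-l) * ((u+v) + m)
        = (m.choose l : ℂ) * poch u (l+1) * poch v (m-l)
          + (m.choose l : ℂ) * poch u l * poch v (m-l+1) := by
      intro l hl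
      rw [Finset.mem_range] at hl
      have hlm : l ≤ m := Nat.lt_succ_iff.mp hl
      rw [poch_succ u l, poch_succ v (m-l)]
      have hcast : ((m - l : ℕ) : ℂ) = (m : ℂ) - l := by
        push_cast [Nat.cast_sub hlm]; ring
      rw [hcast]; ring
    have step : poch (u+v) (m+1)
        = ∑ l ∈ range (m+1), ((m.choose l : ℂ) * poch u (l+1) * poch v (m-l)
          + (m.choose l : ℂ) * poch u l * poch v (m-l+1)) := by
      rw [poch_succ, ← ih, Finset.sum_mul]
      exact Finset.sum_congr rfl key
    rw [step, Finset.sum_add_distrib]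
    rw [Finset.sum_range_succ' (fun l => ((m+1).choose l : ℂ) * poch u l * poch v (m+1-l)) (m+1)]
    have e1 : ∀ l ∈ range (m+1),
        (((m+1).choose (l+1) : ℕ) : ℂ) * poch u (l+1) * poch v (m+1-(l+1))
        = (m.choose l : ℂ) * poch u (l+1) * poch v (m-l)
          + (m.choose (l+1) : ℂ) * poch u (l+1) * poch v (m-l) := by
      intro l hl
      rw [Nat.choose_succ_succ m l]
      push_cast
      ring
    rw [Finset.sum_congr rfl e1, Finset.sum_add_distrib]
    have e2 : ∑ l ∈ range (m+1), (m.choose (l+1) : ℂ) * poch u (l+1) * poch v (m-l)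
        + (((m+1).choose 0 : ℕ) : ℂ) * poch u 0 * poch v (m+1-0)
        = ∑ l ∈ range (m+1), (m.choose l : ℂ) * poch u l * poch v (m-l+1) := by
      rw [Finset.sum_range_succ (fun l => (m.choose (l+1) : ℂ) * poch u (l+1) * poch v (m-l)) m]
      rw [Finset.sum_range_succ' (fun l => (m.choose l : ℂ) * poch u l * poch v (m-l+1)) m]
      simp only [Nat.choose_succ_self, Nat.cast_zero, zero_mul, add_zero, Nat.choose_zero_right,
        Nat.cast_one, one_mul, Nat.sub_zero, Nat.choose_zero_right, mul_zero, zero_add]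
      congr 1
      apply Finset.sum_congr rfl
      intro l hl
      rw [Finset.mem_range] at hl
      have h9 : m - (l+1) + 1 = m - l := by omega
      rw [h9]
    rw [add_assoc, e2]

/-- Chu–Vandermonde. -/
lemma chu (B : ℂ) : ∀ (k:ℕ) (C:ℂ),
    ∑ j ∈ range (k+1), (-1:ℂ)^j * (k.choose j : ℂ) * poch B j * poch (C+j) (k-j)
      = poch (C-B) k := by
  intro k
  induction k with
  | zero => intro C; simp [poch]
  | succ k ih =>
    intro C
    rw [Finset.sum_range_succ'
      (fun j => (-1:ℂ)^j * ((k+1).choose j : ℂ) * poch B j * poch (C+j) (k+1-j)) (k+1)]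
    have e1 : ∀ j ∈ range (k+1),
        (-1:ℂ)^(j+1) * (((k+1).choose (j+1) : ℕ) : ℂ) * poch B (j+1) * poch (C+((j+1:ℕ):ℂ)) (k+1-(j+1))
        = (-((-1:ℂ)^j * (k.choose j : ℂ) * poch B j * (B+j) * poch ((C+1)+j) (k-j)))
          + (-1:ℂ)^(j+1) * (k.choose (j+1) : ℂ) * poch B (j+1) * poch (C+((j+1:ℕ):ℂ)) (k-j) := by
      intro j hj
      rw [Nat.choose_succ_succ k j, poch_succ B j]
      have h9 : poch (C+((j+1:ℕ):ℂ)) (k+1-(j+1)) = poch (C+((j+1:ℕ):ℂ)) (k-j) := by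
        congr 1; omega
      rw [h9]
      have h8 : poch ((C+1)+(j:ℂ)) (k-j) = poch (C+((j+1:ℕ):ℂ)) (k-j) := by
        congr 1; push_cast; ring
      rw [h8]
      push_cast
      ring
    rw [Finset.sum_congr rfl e1, Finset.sum_add_distrib]
    have e2 : ∑ j ∈ range (k+1), (-1:ℂ)^(j+1) * (k.choose (j+1) : ℂ) * poch B (j+1) * poch (C+((j+1:ℕ):ℂ)) (k-j)
        + (-1:ℂ)^0 * (((k+1).choose 0 : ℕ) : ℂ) * poch B 0 * poch (C+((0:ℕ):ℂ)) (k+1-0)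
        = ∑ j ∈ range (k+1), (-1:ℂ)^j * (k.choose j : ℂ) * poch B j * (C+j) * poch ((C+1)+j) (k-j) := by
      have hsr := Finset.sum_range_succ'
        (fun j => (-1:ℂ)^j * (k.choose j : ℂ) * poch B j * poch (C+j) (k+1-j)) (k+1)
      have h7 : ∀ j ∈ range (k+1),
          (-1:ℂ)^(j+1) * (k.choose (j+1) : ℂ) * poch B (j+1) * poch (C+((j+1:ℕ):ℂ)) (k+1-(j+1))
          = (-1:ℂ)^(j+1) * (k.choose (j+1) : ℂ) * poch B (j+1) * poch (C+((j+1:ℕ):ℂ)) (k-j) := by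
        intro j hj; congr 2; omega
      rw [Finset.sum_congr rfl h7] at hsr
      have h0 : ((-1:ℂ))^0 * (((k+1).choose 0:ℕ):ℂ) * poch B 0 * poch (C+((0:ℕ):ℂ)) (k+1-0)
          = (-1:ℂ)^0 * ((k.choose 0:ℕ):ℂ) * poch B 0 * poch (C+((0:ℕ):ℂ)) (k+1-0) := by
        norm_num
      rw [h0, ← hsr]
      rw [Finset.sum_range_succ
        (fun j => (-1:ℂ)^j * (k.choose j : ℂ) * poch B j * poch (C+j) (k+1-j)) (k+1)]
      simp only [Nat.choose_succ_self, Nat.cast_zero, mul_zero, zero_mul, add_zero]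
      apply Finset.sum_congr rfl
      intro j hj
      rw [Finset.mem_range] at hj
      have h6 : k + 1 - j = (k - j) + 1 := by omega
      rw [h6, poch_succ' (C+(j:ℂ)) (k-j)]
      have h5 : (C+(j:ℂ))+1 = (C+1)+(j:ℂ) := by ring
      rw [h5]
      ring
    rw [add_assoc, e2]
    have e3 : ∀ j ∈ range (k+1),
        (-((-1:ℂ)^j * (k.choose j : ℂ) * poch B j * (B+j) * poch ((C+1)+j) (k-j)))
        + (-1:ℂ)^j * (k.choose j : ℂ) * poch B j * (C+j) * poch ((C+1)+j) (k-j)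
        = (C-B) * ((-1:ℂ)^j * (k.choose j : ℂ) * poch B j * poch ((C+1)+j) (k-j)) := by
      intro j hj; ring
    rw [← Finset.sum_add_distrib, Finset.sum_congr rfl e3, ← Finset.mul_sum, ih (C+1)]
    rw [poch_succ' (C-B) k]
    congr 1
    ring

lemma vand_div (u v : ℂ) (m : ℕ) :
    ∑ l ∈ range (m+1), poch u l * poch v (m-l) / ((l.factorial : ℂ) * ((m-l).factorial : ℂ))
      = poch (u+v) m / (m.factorial : ℂ) := by
  rw [← vand u v m, Finset.sum_div]
  apply Finset.sum_congr rfl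
  intro l hl
  rw [Finset.mem_range] at hl
  have hlm : l ≤ m := Nat.lt_succ_iff.mp hl
  have hfac : (m.choose l) * l.factorial * (m-l).factorial = m.factorial :=
    Nat.choose_mul_factorial_mul_factorial hlm
  have h1 : ((l.factorial : ℂ) * ((m-l).factorial : ℂ)) ≠ 0 :=
    mul_ne_zero (Nat.cast_ne_zero.mpr (Nat.factorial_ne_zero _))
      (Nat.cast_ne_zero.mpr (Nat.factorial_ne_zero _))
  have h2 : (m.factorial : ℂ) ≠ 0 := Nat.cast_ne_zero.mpr (Nat.factorial_ne_zero _)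
  field_simp
  rw [← hfac]
  push_cast
  rw [mul_assoc _ (l.factorial : ℂ), mul_div_assoc, mul_div_assoc, div_self h1, mul_one]

lemma poch_neg_nat (n : ℕ) : ∀ j, j ≤ n →
    poch (-(n:ℂ)) j = (-1:ℂ)^j * (n.factorial : ℂ) / ((n-j).factorial : ℂ) := by
  intro j
  induction j with
  | zero =>
    intro _
    simp only [poch, Finset.range_zero, Finset.prod_empty, pow_zero, one_mul, Nat.sub_zero]
    rw [div_self (Nat.cast_ne_zero.mpr (Nat.factorial_ne_zero _))]
  | succ j ih =>
    intro hj
    have hj' : j ≤ n := by omega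
    have hsub : ((n - j : ℕ):ℂ) = (n:ℂ) - j := by
      push_cast [Nat.cast_sub hj']; ring
    have hfac : ((n-j).factorial : ℂ) = ((n-j : ℕ):ℂ) * ((n-(j+1)).factorial : ℂ) := by
      have h : n - j = (n - (j+1)) + 1 := by omega
      rw [h, Nat.factorial_succ]
      push_cast
      ring
    have hne : ((n-(j+1)).factorial : ℂ) ≠ 0 := Nat.cast_ne_zero.mpr (Nat.factorial_ne_zero _)
    have hne2' : (n:ℂ) - j ≠ 0 := by
      rw [← hsub]
      have : 0 < n - j := by omega
      exact_mod_cast Nat.pos_iff_ne_zero.mp this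
    rw [poch_succ, ih hj', hfac, hsub]
    field_simp
    ring

lemma cdHahn_alt (x : ℝ) (a b c : ℂ) (hab : 0 < (a+b).re) (hac : 0 < (a+c).re) (n : ℕ) :
    cdHahn n x a b c
      = poch (a+b) n * (n.factorial : ℂ) *
        ∑ k ∈ range (n+1),
          poch (a + Complex.I*x) k * poch (b + Complex.I*x) k
            / (poch (a+b) k * (k.factorial : ℂ))
            * (poch (c - Complex.I*x) (n-k) / ((n-k).factorial : ℂ)) := by
  have hPne : ∀ j, poch (a+b) j ≠ 0 := poch_ne_zero hab
  have hQne : ∀ j, poch (a+c) j ≠ 0 := poch_ne_zero hac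
  have hfacne : ∀ m : ℕ, ((m.factorial : ℂ)) ≠ 0 :=
    fun m => Nat.cast_ne_zero.mpr (Nat.factorial_ne_zero m)
  have step1 : ∀ k, k ≤ n →
      poch (a + Complex.I*x) k * poch (b + Complex.I*x) k / (poch (a+b) k * (k.factorial:ℂ))
        * (poch (c - Complex.I*x) (n-k) / ((n-k).factorial : ℂ))
      = ∑ j ∈ range (n+1),
          (-1:ℂ)^j * (k.choose j : ℂ) * poch (a - Complex.I*x) j / poch (a+b) j
          * (poch (a + Complex.I*x) k / (k.factorial:ℂ))
          * (poch (c - Complex.I*x) (n-k) / ((n-k).factorial : ℂ)) := by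
    intro k hk
    have key : poch (b + Complex.I*x) k / poch (a+b) k
        = ∑ j ∈ range (k+1),
            (-1:ℂ)^j * (k.choose j : ℂ) * poch (a - Complex.I*x) j / poch (a+b) j := by
      have hchu := chu (a - Complex.I*x) k (a+b)
      have hb' : (a+b) - (a - Complex.I*x) = b + Complex.I*x := by ring
      rw [hb'] at hchu
      rw [div_eq_iff (hPne k), ← hchu, Finset.sum_mul]
      apply Finset.sum_congr rfl
      intro j hj
      rw [Finset.mem_range] at hj
      have hjk : j ≤ k := by omega
      have hsplit : poch (a+b) k = poch (a+b) j * poch ((a+b)+j) (k-j) := by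
        rw [← poch_add]; congr 1; omega
      rw [hsplit]
      field_simp [hPne j]
    have expand : poch (a + Complex.I*x) k * poch (b + Complex.I*x) k
            / (poch (a+b) k * (k.factorial:ℂ))
            * (poch (c - Complex.I*x) (n-k) / ((n-k).factorial : ℂ))
        = poch (b + Complex.I*x) k / poch (a+b) k
            * (poch (a + Complex.I*x) k / (k.factorial:ℂ))
            * (poch (c - Complex.I*x) (n-k) / ((n-k).factorial : ℂ)) := by
      ring
    rw [expand, key, Finset.sum_mul, Finset.sum_mul]
    apply Finset.sum_subset (Finset.range_subset_range.mpr (by omega))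
    intro j hjn hjk
    rw [Finset.mem_range] at hjn hjk
    have hz : k.choose j = 0 := Nat.choose_eq_zero_of_lt (by omega)
    rw [hz]
    simp
  have main : ∑ k ∈ range (n+1),
      poch (a + Complex.I*x) k * poch (b + Complex.I*x) k / (poch (a+b) k * (k.factorial:ℂ))
        * (poch (c - Complex.I*x) (n-k) / ((n-k).factorial : ℂ))
      = ∑ j ∈ range (n+1),
          (-1:ℂ)^j * poch (a - Complex.I*x) j * poch (a + Complex.I*x) j
          / (poch (a+b) j * (j.factorial : ℂ))
          * (poch ((a+c)+j) (n-j) / ((n-j).factorial : ℂ)) := by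
    rw [Finset.sum_congr rfl (fun k hk => step1 k (Nat.lt_succ_iff.mp (Finset.mem_range.mp hk)))]
    rw [Finset.sum_comm]
    apply Finset.sum_congr rfl
    intro j hj
    rw [Finset.mem_range] at hj
    have hjn : j ≤ n := by omega
    have drop : ∑ k ∈ range (n+1),
          (-1:ℂ)^j * (k.choose j : ℂ) * poch (a - Complex.I*x) j / poch (a+b) j
          * (poch (a + Complex.I*x) k / (k.factorial:ℂ))
          * (poch (c - Complex.I*x) (n-k) / ((n-k).factorial : ℂ))
        = ∑ k ∈ Finset.Ico j (n+1),
          (-1:ℂ)^j * (k.choose j : ℂ) * poch (a - Complex.I*x) j / poch (a+b) j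
          * (poch (a + Complex.I*x) k / (k.factorial:ℂ))
          * (poch (c - Complex.I*x) (n-k) / ((n-k).factorial : ℂ)) := by
      refine (Finset.sum_subset ?_ ?_).symm
      · intro k hk
        rw [Finset.mem_Ico] at hk
        rw [Finset.mem_range]
        omega
      · intro k hk hk2
        rw [Finset.mem_range] at hk
        rw [Finset.mem_Ico] at hk2
        have hz : k.choose j = 0 := Nat.choose_eq_zero_of_lt (by omega)
        rw [hz]
        simp
    rw [drop, Finset.sum_Ico_eq_sum_range]
    have hrange : n + 1 - j = (n - j) + 1 := by omega
    rw [hrange]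
    have inner : ∀ l ∈ range ((n-j)+1),
        (-1:ℂ)^j * ((j+l).choose j : ℂ) * poch (a - Complex.I*x) j / poch (a+b) j
          * (poch (a + Complex.I*x) (j+l) / ((j+l).factorial:ℂ))
          * (poch (c - Complex.I*x) (n-(j+l)) / ((n-(j+l)).factorial : ℂ))
        = ((-1:ℂ)^j * poch (a - Complex.I*x) j * poch (a + Complex.I*x) j
            / (poch (a+b) j * (j.factorial : ℂ)))
          * (poch ((a + Complex.I*x)+j) l * poch (c - Complex.I*x) ((n-j)-l)
              / ((l.factorial : ℂ) * (((n-j)-l).factorial : ℂ))) := by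
      intro l hl
      rw [Finset.mem_range] at hl
      have hln : l ≤ n - j := by omega
      have hA : poch (a + Complex.I*x) (j+l) = poch (a + Complex.I*x) j * poch ((a + Complex.I*x)+j) l :=
        poch_add _ j l
      have hsub2 : n - (j+l) = (n-j) - l := by omega
      have hcho : (((j+l).choose j : ℕ) : ℂ) * (j.factorial : ℂ) * (l.factorial : ℂ)
          = ((j+l).factorial : ℂ) := by
        rw [← Nat.cast_mul, ← Nat.cast_mul]
        congr 1
        have := Nat.choose_mul_factorial_mul_factorial (Nat.le_add_right j l)
        simpa using this
      rw [hA, hsub2, ← hcho]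
      have h1 : ((j.factorial:ℂ)) ≠ 0 := hfacne j
      have h2 : ((l.factorial:ℂ)) ≠ 0 := hfacne l
      have h3 : ((((n-j)-l).factorial:ℂ)) ≠ 0 := hfacne _
      have h4 : (((j+l).choose j : ℕ) : ℂ) ≠ 0 :=
        Nat.cast_ne_zero.mpr (Nat.pos_iff_ne_zero.mp (Nat.choose_pos (Nat.le_add_right j l)))
      simp only [div_mul_eq_mul_div, mul_div_assoc', div_div]
      refine (div_eq_div_iff ?_ ?_).mpr ?_
      · (repeat' apply mul_ne_zero) <;>
          first | exact hPne j | exact hQne j | exact h4 | exact hfacne _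
      · (repeat' apply mul_ne_zero) <;>
          first | exact hPne j | exact hQne j | exact h4 | exact hfacne _
      ring
    rw [Finset.sum_congr rfl inner]
    rw [← Finset.mul_sum]
    rw [vand_div]
    have hac' : (a + Complex.I*x) + (j:ℂ) + (c - Complex.I*x) = (a+c) + j := by ring
    rw [hac']
  rw [main]
  rw [cdHahn]
  rw [mul_assoc]
  simp only [Finset.mul_sum]
  apply Finset.sum_congr rfl
  intro j hj
  rw [Finset.mem_range] at hj
  have hjn : j ≤ n := by omega
  rw [poch_neg_nat n j hjn]
  have hsplitQ : poch (a+c) n = poch (a+c) j * poch ((a+c)+j) (n-j) := by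
    rw [← poch_add]; congr 1; omega
  rw [hsplitQ]
  have h1 : ((j.factorial:ℂ)) ≠ 0 := hfacne j
  have h2 : (((n-j).factorial:ℂ)) ≠ 0 := hfacne _
  have h3 : ((n.factorial:ℂ)) ≠ 0 := hfacne n
  simp only [div_mul_eq_mul_div, mul_div_assoc', div_div]
  refine (div_eq_div_iff ?_ ?_).mpr ?_
  · (repeat' apply mul_ne_zero) <;>
      first | exact hPne j | exact hQne j | exact hfacne _
  · (repeat' apply mul_ne_zero) <;>
      first | exact hPne j | exact hQne j | exact hfacne _
  ring

lemma fact_helper : ∀ (N m : ℕ), N.factorial * ∏ i ∈ range m, (N+1+i) = (N+m).factorial := by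
  intro N m
  induction m with
  | zero => simp
  | succ m ih =>
    rw [Finset.prod_range_succ, ← mul_assoc, ih]
    have h : N + (m+1) = (N+m) + 1 := by omega
    rw [h, Nat.factorial_succ]
    ring_nf

lemma prod_bound (N m : ℕ) : ∏ i ∈ range m, (N+1+i) ≤ m.factorial * ((1+N)*(1+m))^N := by
  have h1 : N.factorial * ∏ i ∈ range m, (N+1+i) = (N+m).factorial := fact_helper N m
  have h2 : m.factorial * ∏ i ∈ range N, (m+1+i) = (m+N).factorial := fact_helper m N
  have h3 : ∏ i ∈ range N, (m+1+i) ≤ N.factorial * ((1+N)*(1+m))^N := by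
    calc ∏ i ∈ range N, (m+1+i) ≤ ∏ i ∈ range N, ((i+1) * ((1+N)*(1+m))) := by
          apply Finset.prod_le_prod'
          intro i hi
          rw [Finset.mem_range] at hi
          calc m+1+i ≤ (1+N)*(1+m) := by nlinarith [Nat.zero_le (N*m)]
            _ ≤ (i+1)*((1+N)*(1+m)) := Nat.le_mul_of_pos_left _ (by omega)
      _ = N.factorial * ((1+N)*(1+m))^N := by
          rw [Finset.prod_mul_distrib, Finset.prod_const, Finset.card_range,
            Finset.prod_range_add_one_eq_factorial]
  have h4 : N.factorial * ∏ i ∈ range m, (N+1+i)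
      ≤ N.factorial * (m.factorial * ((1+N)*(1+m))^N) := by
    rw [h1]
    have h : (N+m).factorial = (m+N).factorial := by rw [Nat.add_comm]
    rw [h, ← h2]
    calc m.factorial * ∏ i ∈ range N, (m+1+i)
        ≤ m.factorial * (N.factorial * ((1+N)*(1+m))^N) :=
          Nat.mul_le_mul_left _ h3
      _ = N.factorial * (m.factorial * ((1+N)*(1+m))^N) := by ring
  exact Nat.le_of_mul_le_mul_left h4 (Nat.factorial_pos N)

lemma prod_bound_real (N m : ℕ) :
    ∏ i ∈ range m, ((N:ℝ)+1+i) ≤ (m.factorial : ℝ) * ((1+(N:ℝ))*(1+(m:ℝ)))^N := by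
  have h := prod_bound N m
  have hc : ((∏ i ∈ range m, (N+1+i) : ℕ) : ℝ) ≤ ((m.factorial * ((1+N)*(1+m))^N : ℕ) : ℝ) :=
    Nat.cast_le.mpr h
  push_cast at hc
  convert hc using 2

lemma norm_poch_le (w : ℂ) (N : ℕ) (h : ‖w‖ ≤ (N:ℝ)+1) (m : ℕ) :
    ‖poch w m‖ ≤ (m.factorial : ℝ) * ((1+(N:ℝ))*(1+(m:ℝ)))^N := by
  have h1 : ‖poch w m‖ ≤ ∏ i ∈ range m, ((N:ℝ)+1+i) := by
    rw [poch, norm_prod]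
    apply Finset.prod_le_prod (fun i _ => norm_nonneg _)
    intro i _
    calc ‖w + (i:ℂ)‖ ≤ ‖w‖ + ‖(i:ℂ)‖ := norm_add_le _ _
      _ ≤ (N:ℝ)+1+i := by
          rw [Complex.norm_natCast]
          linarith
  exact h1.trans (prod_bound_real N m)

lemma norm_poch_pair_le (u v w : ℂ) (N : ℕ)
    (hfac : ∀ i : ℕ, ‖u + i‖ * ‖v + i‖ ≤ ‖w + i‖ * ((N:ℝ)+1+i)) (k : ℕ) :
    ‖poch u k‖ * ‖poch v k‖
      ≤ ‖poch w k‖ * ((k.factorial : ℝ) * ((1+(N:ℝ))*(1+(k:ℝ)))^N) := by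
  have h1 : ‖poch u k‖ * ‖poch v k‖ ≤ ∏ i ∈ range k, (‖w + i‖ * ((N:ℝ)+1+i)) := by
    rw [poch, poch, norm_prod, norm_prod, ← Finset.prod_mul_distrib]
    apply Finset.prod_le_prod (fun i _ => mul_nonneg (norm_nonneg _) (norm_nonneg _))
    intro i _
    exact hfac i
  rw [Finset.prod_mul_distrib] at h1
  have h2 : ∏ i ∈ range k, ‖w + (i:ℂ)‖ = ‖poch w k‖ := by rw [poch, norm_prod]
  rw [h2] at h1
  refine h1.trans ?_
  apply mul_le_mul_of_nonneg_left (prod_bound_real N k) (norm_nonneg _)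

theorem cdHahn_bound (x : ℝ) (hx : 0 < x) (a b c : ℂ)
    (ha : 0 < a.re) (hb : 0 < b.re) (hc : 0 < c.re)
    (hconj : ({a, b, c} : Multiset ℂ).map (starRingEnd ℂ) = ({a, b, c} : Multiset ℂ)) :
    ∃ K > (0 : ℝ), ∃ σ > (0 : ℝ), ∀ n : ℕ,
      ‖cdHahn n x a b c‖ ≤ K * (n.factorial : ℝ) ^ 2 * (1 + (n : ℝ)) ^ σ := by
  have hab : 0 < (a+b).re := by rw [Complex.add_re]; linarith
  have hac : 0 < (a+c).re := by rw [Complex.add_re]; linarith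
  set s : ℝ := (a+b).re with hs
  set M : ℝ := max ‖a + Complex.I*(x:ℂ)‖ ‖b + Complex.I*(x:ℂ)‖ with hM
  have hM0 : (0:ℝ) ≤ M := le_trans (norm_nonneg _) (le_max_left _ _)
  set N₁ : ℕ := ⌈‖a+b‖⌉₊ with hN₁
  set N₂ : ℕ := ⌈max (2*M) (M^2/s)⌉₊ with hN₂
  set N₃ : ℕ := ⌈‖c - Complex.I*(x:ℂ)‖⌉₊ with hN₃
  refine ⟨(1+(N₁:ℝ))^N₁ * (1+(N₂:ℝ))^N₂ * (1+(N₃:ℝ))^N₃, by positivity,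
    ((N₁+N₂+N₃+1 : ℕ) : ℝ), by exact_mod_cast Nat.succ_pos (N₁+N₂+N₃), ?_⟩
  intro n
  rw [Real.rpow_natCast]
  -- norm of the front factor
  have hP : ‖poch (a+b) n‖ ≤ (n.factorial:ℝ) * ((1+(N₁:ℝ))*(1+(n:ℝ)))^N₁ :=
    norm_poch_le _ _ (le_trans (Nat.le_ceil _) (by linarith)) n
  -- pairwise factor bound
  have hs0 : 0 < s := hab
  have h2M : 2*M ≤ s+1+(N₂:ℝ) := by
    have h1 : 2*M ≤ max (2*M) (M^2/s) := le_max_left _ _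
    have h2 : max (2*M) (M^2/s) ≤ (N₂:ℝ) := Nat.le_ceil _
    linarith
  have hM2 : M^2 ≤ s*(1+(N₂:ℝ)) := by
    have h1 : M^2/s ≤ max (2*M) (M^2/s) := le_max_right _ _
    have h2 : max (2*M) (M^2/s) ≤ (N₂:ℝ) := Nat.le_ceil _
    have h3 : M^2/s ≤ (N₂:ℝ) := le_trans h1 h2
    rw [div_le_iff₀ hs0] at h3
    nlinarith
  have hpair : ∀ i : ℕ, ‖(a + Complex.I*(x:ℂ)) + i‖ * ‖(b + Complex.I*(x:ℂ)) + i‖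
      ≤ ‖(a+b) + i‖ * ((N₂:ℝ)+1+i) := by
    intro i
    have hi0 : (0:ℝ) ≤ i := Nat.cast_nonneg i
    have hu : ‖(a + Complex.I*(x:ℂ)) + i‖ ≤ M + i := by
      calc ‖(a + Complex.I*(x:ℂ)) + i‖ ≤ ‖a + Complex.I*(x:ℂ)‖ + ‖(i:ℂ)‖ := norm_add_le _ _
        _ ≤ M + i := by rw [Complex.norm_natCast]; exact add_le_add_left (le_max_left _ _) _
    have hv : ‖(b + Complex.I*(x:ℂ)) + i‖ ≤ M + i := by
      calc ‖(b + Complex.I*(x:ℂ)) + i‖ ≤ ‖b + Complex.I*(x:ℂ)‖ + ‖(i:ℂ)‖ := norm_add_le _ _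
        _ ≤ M + i := by rw [Complex.norm_natCast]; exact add_le_add_left (le_max_right _ _) _
    have hw : s + i ≤ ‖(a+b) + (i:ℂ)‖ := by
      have h1 : ((a+b) + (i:ℂ)).re = s + i := by
        simp [Complex.add_re, Complex.natCast_re, hs]
      calc s + i = ((a+b) + (i:ℂ)).re := h1.symm
        _ ≤ ‖(a+b) + (i:ℂ)‖ := Complex.re_le_norm _
    calc ‖(a + Complex.I*(x:ℂ)) + i‖ * ‖(b + Complex.I*(x:ℂ)) + i‖
        ≤ (M+i) * (M+i) := by
          apply mul_le_mul hu hv (norm_nonneg _) (by linarith)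
      _ ≤ (s+i) * ((N₂:ℝ)+1+i) := by nlinarith [mul_nonneg hi0 (by linarith : (0:ℝ) ≤ s+1+(N₂:ℝ)-2*M)]
      _ ≤ ‖(a+b) + (i:ℂ)‖ * ((N₂:ℝ)+1+i) := by
          apply mul_le_mul_of_nonneg_right hw (by positivity)
  have hAB := norm_poch_pair_le (a + Complex.I*(x:ℂ)) (b + Complex.I*(x:ℂ)) (a+b) N₂ hpair
  have hPpos : ∀ k : ℕ, 0 < ‖poch (a+b) k‖ :=
    fun k => norm_pos_iff.mpr (poch_ne_zero hab k)
  have hdiv : ∀ k : ℕ,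
      ‖poch (a + Complex.I*(x:ℂ)) k * poch (b + Complex.I*(x:ℂ)) k
        / (poch (a+b) k * (k.factorial : ℂ))‖ ≤ ((1+(N₂:ℝ))*(1+(k:ℝ)))^N₂ := by
    intro k
    rw [norm_div, norm_mul, norm_mul, Complex.norm_natCast]
    rw [div_le_iff₀ (mul_pos (hPpos k) (by exact_mod_cast Nat.factorial_pos k))]
    calc ‖poch (a + Complex.I*(x:ℂ)) k‖ * ‖poch (b + Complex.I*(x:ℂ)) k‖
        ≤ ‖poch (a+b) k‖ * ((k.factorial:ℝ) * ((1+(N₂:ℝ))*(1+(k:ℝ)))^N₂) := hAB k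
      _ = ((1+(N₂:ℝ))*(1+(k:ℝ)))^N₂ * (‖poch (a+b) k‖ * (k.factorial:ℝ)) := by ring
  have hCdiv : ∀ m : ℕ,
      ‖poch (c - Complex.I*(x:ℂ)) m / (m.factorial : ℂ)‖ ≤ ((1+(N₃:ℝ))*(1+(m:ℝ)))^N₃ := by
    intro m
    rw [norm_div, Complex.norm_natCast]
    rw [div_le_iff₀ (by exact_mod_cast Nat.factorial_pos m)]
    calc ‖poch (c - Complex.I*(x:ℂ)) m‖
        ≤ (m.factorial:ℝ) * ((1+(N₃:ℝ))*(1+(m:ℝ)))^N₃ :=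
          norm_poch_le _ _ (le_trans (Nat.le_ceil _) (by linarith)) m
      _ = ((1+(N₃:ℝ))*(1+(m:ℝ)))^N₃ * (m.factorial:ℝ) := by ring
  -- per-term bound
  have hterm : ∀ k ∈ range (n+1),
      ‖poch (a + Complex.I*(x:ℂ)) k * poch (b + Complex.I*(x:ℂ)) k
          / (poch (a+b) k * (k.factorial : ℂ))
          * (poch (c - Complex.I*(x:ℂ)) (n-k) / ((n-k).factorial : ℂ))‖
        ≤ ((1+(N₂:ℝ))*(1+(n:ℝ)))^N₂ * ((1+(N₃:ℝ))*(1+(n:ℝ)))^N₃ := by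
    intro k hk
    rw [Finset.mem_range] at hk
    rw [norm_mul]
    have m1 : ((1+(N₂:ℝ))*(1+(k:ℝ)))^N₂ ≤ ((1+(N₂:ℝ))*(1+(n:ℝ)))^N₂ := by
      apply pow_le_pow_left₀ (by positivity)
      have : (k:ℝ) ≤ n := by exact_mod_cast Nat.lt_succ_iff.mp hk
      nlinarith [(Nat.cast_nonneg N₂ : (0:ℝ) ≤ (N₂:ℝ))]
    have m2 : ((1+(N₃:ℝ))*(1+((n-k:ℕ):ℝ)))^N₃ ≤ ((1+(N₃:ℝ))*(1+(n:ℝ)))^N₃ := by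
      apply pow_le_pow_left₀ (by positivity)
      have : ((n-k:ℕ):ℝ) ≤ n := by exact_mod_cast Nat.sub_le n k
      nlinarith [(Nat.cast_nonneg N₃ : (0:ℝ) ≤ (N₃:ℝ))]
    apply mul_le_mul ((hdiv k).trans m1) ((hCdiv (n-k)).trans m2) (norm_nonneg _) (by positivity)
  -- assemble
  rw [cdHahn_alt x a b c hab hac n]
  calc ‖poch (a+b) n * (n.factorial : ℂ) *
        ∑ k ∈ range (n+1),
          poch (a + Complex.I*x) k * poch (b + Complex.I*x) k
            / (poch (a+b) k * (k.factorial : ℂ))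
            * (poch (c - Complex.I*x) (n-k) / ((n-k).factorial : ℂ))‖
      = ‖poch (a+b) n‖ * (n.factorial:ℝ) *
        ‖∑ k ∈ range (n+1),
          poch (a + Complex.I*x) k * poch (b + Complex.I*x) k
            / (poch (a+b) k * (k.factorial : ℂ))
            * (poch (c - Complex.I*x) (n-k) / ((n-k).factorial : ℂ))‖ := by
        rw [norm_mul, norm_mul, Complex.norm_natCast]
    _ ≤ ((n.factorial:ℝ) * ((1+(N₁:ℝ))*(1+(n:ℝ)))^N₁) * (n.factorial:ℝ) *
        ((1+(n:ℝ)) * (((1+(N₂:ℝ))*(1+(n:ℝ)))^N₂ * ((1+(N₃:ℝ))*(1+(n:ℝ)))^N₃)) := by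
        apply mul_le_mul
        · exact mul_le_mul_of_nonneg_right hP (Nat.cast_nonneg _)
        · calc ‖∑ k ∈ range (n+1),
              poch (a + Complex.I*x) k * poch (b + Complex.I*x) k
                / (poch (a+b) k * (k.factorial : ℂ))
                * (poch (c - Complex.I*x) (n-k) / ((n-k).factorial : ℂ))‖
              ≤ ∑ k ∈ range (n+1),
                ‖poch (a + Complex.I*x) k * poch (b + Complex.I*x) k
                / (poch (a+b) k * (k.factorial : ℂ))
                * (poch (c - Complex.I*x) (n-k) / ((n-k).factorial : ℂ))‖ :=
                norm_sum_le _ _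
            _ ≤ ∑ _k ∈ range (n+1),
                ((1+(N₂:ℝ))*(1+(n:ℝ)))^N₂ * ((1+(N₃:ℝ))*(1+(n:ℝ)))^N₃ :=
                Finset.sum_le_sum hterm
            _ = (1+(n:ℝ)) * (((1+(N₂:ℝ))*(1+(n:ℝ)))^N₂ * ((1+(N₃:ℝ))*(1+(n:ℝ)))^N₃) := by
                rw [Finset.sum_const, Finset.card_range, nsmul_eq_mul]
                push_cast
                ring
        · exact norm_nonneg _
        · positivity
    _ = ((1+(N₁:ℝ))^N₁ * (1+(N₂:ℝ))^N₂ * (1+(N₃:ℝ))^N₃) * (n.factorial:ℝ)^2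
        * (1+(n:ℝ))^(N₁+N₂+N₃+1) := by
        rw [mul_pow, mul_pow, mul_pow, pow_add, pow_add, pow_add, pow_one]
        ring
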